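/- Consider a Gaussian evolutionary algorithm with λ_n ≤ M·λ_{n−1} and offspring x_{n,i} = x_n + σ_{n,i}·N_{n,i} (N_{n,i} i.i.d. standard Gaussian in ℝ^d). Assume local convergence: for every δ > 0 there exists K with P(∀n: ‖x_n‖ ≤ K and ∀i: σ_{n,i} ≤ K e^{−n/K}) ≥ 1 − δ. Then for every ε > 0 there exists K' = K'(ε) such that with probability at least 1 − ε, ‖x_{n,i}‖ ≤ K' for all n and all i ≤ λ_n. -/

import Mathlib

open MeasureTheory ProbabilityTheory Filter
open scoped NNReal ENNReal

/-- The standard Gaussian measure on `EuclideanSpace ℝ (Fin d)`. -/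
noncomputable def stdGaussianE (d : ℕ) : Measure (EuclideanSpace ℝ (Fin d)) :=
  Measure.map (MeasurableEquiv.toLp 2 (Fin d → ℝ))
    (Measure.pi fun _ : Fin d => gaussianReal 0 1)

open Real Set in
/-- Exponential tail bound for the absolute value of a standard Gaussian. -/
lemma gauss_abs_tail {s : ℝ} (hs : 0 ≤ s) :
    gaussianReal 0 1 {x : ℝ | s < |x|} ≤ ENNReal.ofReal (2 * Real.exp (1/2) * Real.exp (-s)) := by
  have hmeas : MeasurableSet {x : ℝ | s < |x|} :=
    measurableSet_lt measurable_const (measurable_id (α := ℝ)).norm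
  rw [gaussianReal_of_var_ne_zero 0 one_ne_zero, withDensity_apply _ hmeas]
  have hpt : ∀ x : ℝ, gaussianPDF 0 1 x ≤ ENNReal.ofReal (Real.exp (1/2) * Real.exp (-|x|)) := by
    intro x
    rw [gaussianPDF_def]
    apply ENNReal.ofReal_le_ofReal
    rw [gaussianPDFReal_def]
    simp only [NNReal.coe_one, mul_one, sub_zero]
    have h1 : (Real.sqrt (2 * Real.pi))⁻¹ ≤ 1 := by
      rw [inv_le_one_iff₀]
      right
      rw [show (1:ℝ) = Real.sqrt 1 by simp]
      exact Real.sqrt_le_sqrt (by nlinarith [Real.pi_gt_three])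
    have h2 : Real.exp (-x ^ 2 / 2) ≤ Real.exp (1/2) * Real.exp (-|x|) := by
      rw [← Real.exp_add]
      apply Real.exp_le_exp.mpr
      have hsq : |x| ^ 2 = x ^ 2 := sq_abs x
      nlinarith [sq_nonneg (|x| - 1)]
    calc (Real.sqrt (2 * Real.pi))⁻¹ * Real.exp (-x ^ 2 / 2)
        ≤ 1 * (Real.exp (1/2) * Real.exp (-|x|)) :=
          mul_le_mul h1 h2 (Real.exp_pos _).le zero_le_one
      _ = Real.exp (1/2) * Real.exp (-|x|) := one_mul _
  have hsub : {x : ℝ | s < |x|} ⊆ Iic (-s) ∪ Ici s := by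
    intro x hx
    simp only [mem_setOf_eq] at hx
    rcases abs_cases x with ⟨h, _⟩ | ⟨h, _⟩
    · right; exact le_of_lt (by rw [h] at hx; exact hx)
    · left; simp only [mem_Iic]; rw [h] at hx; linarith
  calc ∫⁻ x in {x : ℝ | s < |x|}, gaussianPDF 0 1 x
      ≤ ∫⁻ x in {x : ℝ | s < |x|}, ENNReal.ofReal (Real.exp (1/2) * Real.exp (-|x|)) :=
        lintegral_mono fun x => hpt x
    _ ≤ ∫⁻ x in Iic (-s) ∪ Ici s, ENNReal.ofReal (Real.exp (1/2) * Real.exp (-|x|)) :=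
        lintegral_mono_set hsub
    _ ≤ (∫⁻ x in Iic (-s), ENNReal.ofReal (Real.exp (1/2) * Real.exp (-|x|)))
        + ∫⁻ x in Ici s, ENNReal.ofReal (Real.exp (1/2) * Real.exp (-|x|)) :=
        lintegral_union_le _ _ _
    _ ≤ ENNReal.ofReal (Real.exp (1/2) * Real.exp (-s))
        + ENNReal.ofReal (Real.exp (1/2) * Real.exp (-s)) := by
        gcongr ?_ + ?_
        · have hle : ∫⁻ x in Iic (-s), ENNReal.ofReal (Real.exp (1/2) * Real.exp (-|x|))
              ≤ ∫⁻ x in Iic (-s), ENNReal.ofReal (Real.exp (1/2) * Real.exp x) := by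
            apply setLIntegral_mono (by fun_prop)
            intro x _
            exact ENNReal.ofReal_le_ofReal
              (mul_le_mul_of_nonneg_left (Real.exp_le_exp.mpr (neg_abs_le x)) (Real.exp_pos _).le)
          refine hle.trans (le_of_eq ?_)
          rw [← ofReal_integral_eq_lintegral_ofReal
            ((integrableOn_exp_Iic (-s)).const_mul (Real.exp (1/2)))
            (Filter.Eventually.of_forall fun x => by positivity)]
          rw [MeasureTheory.integral_const_mul, integral_exp_Iic]
        · rw [← Measure.restrict_congr_set Ioi_ae_eq_Ici]
          have hle : ∫⁻ x in Ioi s, ENNReal.ofReal (Real.exp (1/2) * Real.exp (-|x|))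
              ≤ ∫⁻ x in Ioi s, ENNReal.ofReal (Real.exp (1/2) * Real.exp (-x)) := by
            apply setLIntegral_mono (by fun_prop)
            intro x _
            exact ENNReal.ofReal_le_ofReal
              (mul_le_mul_of_nonneg_left
                (Real.exp_le_exp.mpr (neg_le_neg (le_abs_self x))) (Real.exp_pos _).le)
          refine hle.trans (le_of_eq ?_)
          have hInt : IntegrableOn (fun x : ℝ => Real.exp (-x)) (Set.Ioi s) := by
            simpa using exp_neg_integrableOn_Ioi s one_pos
          rw [← ofReal_integral_eq_lintegral_ofReal (hInt.const_mul (Real.exp (1/2)))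
            (Filter.Eventually.of_forall fun x => by positivity)]
          rw [MeasureTheory.integral_const_mul, integral_exp_neg_Ioi]
    _ = ENNReal.ofReal (2 * Real.exp (1/2) * Real.exp (-s)) := by
        rw [← ENNReal.ofReal_add (by positivity) (by positivity)]
        ring_nf

open Real Set in
/-- Exponential tail bound for the norm of a standard Gaussian vector. -/
lemma stdGaussianE_tail (d : ℕ) {t : ℝ} (ht : 0 ≤ t) :
    stdGaussianE d {y | (d : ℝ) * t < ‖y‖}
      ≤ (d : ℝ≥0∞) * ENNReal.ofReal (2 * Real.exp (1/2) * Real.exp (-t)) := by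
  classical
  have hSmeas : MeasurableSet {y : EuclideanSpace ℝ (Fin d) | (d : ℝ) * t < ‖y‖} :=
    measurableSet_lt measurable_const measurable_norm
  rw [stdGaussianE, Measure.map_apply (MeasurableEquiv.measurable _) hSmeas]
  set A : Set (Fin d → ℝ) :=
    (MeasurableEquiv.toLp 2 (Fin d → ℝ)) ⁻¹' {y | (d : ℝ) * t < ‖y‖} with hA
  have hsub : A ⊆ ⋃ j ∈ (Finset.univ : Finset (Fin d)), {f : Fin d → ℝ | t < |f j|} := by
    intro f hf
    simp only [hA, mem_preimage, mem_setOf_eq] at hf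
    by_contra hcon
    simp only [Finset.mem_univ, mem_iUnion, mem_setOf_eq, not_exists, not_lt,
      exists_prop, true_and] at hcon
    have hnorm : ‖(MeasurableEquiv.toLp 2 (Fin d → ℝ)) f‖
        = Real.sqrt (∑ j, ‖f j‖ ^ 2) := by
      rw [EuclideanSpace.norm_eq]
      rfl
    have hsum : (∑ j, ‖f j‖ ^ 2) ≤ (d : ℝ) * t ^ 2 := by
      calc (∑ j, ‖f j‖ ^ 2) ≤ ∑ _j : Fin d, t ^ 2 := by
            apply Finset.sum_le_sum
            intro j _
            have := hcon j
            rw [Real.norm_eq_abs]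
            nlinarith [abs_nonneg (f j)]
        _ = (d : ℝ) * t ^ 2 := by simp [Finset.sum_const, Finset.card_univ, nsmul_eq_mul]
    have hle : ‖(MeasurableEquiv.toLp 2 (Fin d → ℝ)) f‖ ≤ (d : ℝ) * t := by
      rw [hnorm]
      have h1 : (∑ j, ‖f j‖ ^ 2) ≤ ((d : ℝ) * t) ^ 2 := by
        refine hsum.trans ?_
        have : (d : ℝ) ≤ (d : ℝ) ^ 2 := by
          rcases Nat.eq_zero_or_pos d with h | h
          · simp [h]
          · have : (1 : ℝ) ≤ (d : ℝ) := by exact_mod_cast h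
            nlinarith
        nlinarith [sq_nonneg t]
      calc Real.sqrt (∑ j, ‖f j‖ ^ 2) ≤ Real.sqrt (((d : ℝ) * t) ^ 2) := Real.sqrt_le_sqrt h1
        _ = (d : ℝ) * t := Real.sqrt_sq (by positivity)
    exact absurd hf (not_lt.mpr hle)
  calc Measure.pi (fun _ : Fin d => gaussianReal 0 1) A
      ≤ Measure.pi (fun _ : Fin d => gaussianReal 0 1)
          (⋃ j ∈ (Finset.univ : Finset (Fin d)), {f : Fin d → ℝ | t < |f j|}) :=
        measure_mono hsub
    _ ≤ ∑ j : Fin d, Measure.pi (fun _ : Fin d => gaussianReal 0 1)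
          {f : Fin d → ℝ | t < |f j|} := measure_biUnion_finset_le _ _
    _ ≤ ∑ _j : Fin d, ENNReal.ofReal (2 * Real.exp (1/2) * Real.exp (-t)) := by
        apply Finset.sum_le_sum
        intro j _
        have heq : {f : Fin d → ℝ | t < |f j|} = Function.eval j ⁻¹' {x : ℝ | t < |x|} := rfl
        rw [heq, Set.eval_preimage, Measure.pi_pi]
        have : ∀ i : Fin d, (gaussianReal 0 1)
            (Function.update (fun _ : Fin d => (univ : Set ℝ)) j {x : ℝ | t < |x|} i)
            = if i = j then gaussianReal 0 1 {x : ℝ | t < |x|} else 1 := by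
          intro i
          rcases eq_or_ne i j with h | h
          · subst h; simp
          · simp [Function.update_of_ne h, h]
        rw [Finset.prod_congr rfl (fun i _ => this i), Finset.prod_ite_eq']
        simp only [Finset.mem_univ, if_true]
        exact gauss_abs_tail ht
    _ = (d : ℝ≥0∞) * ENNReal.ofReal (2 * Real.exp (1/2) * Real.exp (-t)) := by
        simp [Finset.sum_const, Finset.card_univ, nsmul_eq_mul]

/-- Summability of `M^n · exp(−exp(c·n))` for `c > 0`. -/
lemma summable_pow_mul_exp_neg_exp {M c : ℝ} (hM : 0 < M) (hc : 0 < c) :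
    Summable (fun n : ℕ => M ^ n * Real.exp (-Real.exp (c * n))) := by
  apply summable_of_ratio_norm_eventually_le (r := 1/2) (by norm_num)
  have htend : Tendsto (fun n : ℕ => M * Real.exp (Real.exp (c * n) * (1 - Real.exp c)))
      atTop (nhds 0) := by
    have h1 : Tendsto (fun n : ℕ => c * (n : ℝ)) atTop atTop :=
      (tendsto_natCast_atTop_atTop (R := ℝ)).const_mul_atTop hc
    have h2 : Tendsto (fun n : ℕ => Real.exp (c * n)) atTop atTop :=
      Real.tendsto_exp_atTop.comp h1
    have h3 : Tendsto (fun n : ℕ => Real.exp (c * n) * (1 - Real.exp c)) atTop atBot := by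
      apply Tendsto.atTop_mul_const_of_neg _ h2
      have : (1 : ℝ) < Real.exp c := by
        rw [show (1:ℝ) = Real.exp 0 by simp]
        exact Real.exp_lt_exp.mpr hc
      linarith
    have h4 : Tendsto (fun n : ℕ => Real.exp (Real.exp (c * n) * (1 - Real.exp c)))
        atTop (nhds 0) := Real.tendsto_exp_atBot.comp h3
    simpa using h4.const_mul M
  filter_upwards [htend.eventually (gt_mem_nhds (by norm_num : (0:ℝ) < 1/2))] with n hn
  push_cast
  have hfpos : (0:ℝ) ≤ M ^ n * Real.exp (-Real.exp (c * (n:ℝ))) := by positivity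
  have hfpos' : (0:ℝ) ≤ M ^ (n+1) * Real.exp (-Real.exp (c * ((n:ℝ)+1))) := by positivity
  rw [Real.norm_of_nonneg hfpos', Real.norm_of_nonneg hfpos]
  have hkey : M ^ (n+1) * Real.exp (-Real.exp (c * ((n:ℝ)+1)))
      = (M ^ n * Real.exp (-Real.exp (c * n)))
        * (M * Real.exp (Real.exp (c * n) * (1 - Real.exp c))) := by
    have h : Real.exp (c * ((n : ℝ)+1)) = Real.exp (c * (n:ℝ)) * Real.exp c := by
      rw [← Real.exp_add]; ring_nf
    rw [pow_succ, h,
      show -(Real.exp (c * (n:ℝ)) * Real.exp c)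
        = -Real.exp (c * (n:ℝ)) + Real.exp (c * (n:ℝ)) * (1 - Real.exp c) by ring,
      Real.exp_add]
    ring
  rw [hkey]
  calc (M ^ n * Real.exp (-Real.exp (c * n)))
        * (M * Real.exp (Real.exp (c * n) * (1 - Real.exp c)))
      ≤ (M ^ n * Real.exp (-Real.exp (c * n))) * (1/2) :=
        mul_le_mul_of_nonneg_left hn.le hfpos
    _ = 1/2 * (M ^ n * Real.exp (-Real.exp (c * n))) := by ring

/-- Theorem 1 of the paper: a Gaussian evolutionary algorithm with
`λ_n ≤ M·λ_{n−1}`, offspring `x_{n,i} = x_n + σ_{n,i}·N_{n,i}`, satisfying local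
convergence (property `H1(K)` with probability `≥ 1 − δ` for suitable `K`), keeps all its
offspring in a bounded ball: for every `ε > 0` there is `K'` such that with probability at
least `1 − ε`, `‖x_{n,i}‖ ≤ K'` for all `n` and `i ≤ λ_n`. -/
theorem exponential_population_cannot_escape_local_minima
    {Ω : Type*} [MeasureSpace Ω] [IsProbabilityMeasure (ℙ : Measure Ω)]
    {d : ℕ} (x : ℕ → Ω → EuclideanSpace ℝ (Fin d))
    (σ : ℕ → ℕ → Ω → ℝ) (N : ℕ → ℕ → Ω → EuclideanSpace ℝ (Fin d))
    (lam : ℕ → ℕ) (M : ℝ) (hM : 1 < M) (hlam0 : 0 < lam 0)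
    (hlamgrow : ∀ n, (lam (n + 1) : ℝ) ≤ M * (lam n : ℝ))
    (hσpos : ∀ n i ω, 0 < σ n i ω)
    (hNmeas : ∀ n i, Measurable (N n i))
    (hNlaw : ∀ n i, Measure.map (N n i) ℙ = stdGaussianE d)
    (hNiid : iIndepFun (fun p : ℕ × ℕ => N p.1 p.2) ℙ)
    (hLC : ∀ δ : ℝ, 0 < δ → ∃ K : ℝ, 0 < K ∧
      (1 : ENNReal) - ENNReal.ofReal δ ≤
        ℙ {ω | ∀ n, ‖x n ω‖ ≤ K ∧ ∀ i < lam n, σ n i ω ≤ K * Real.exp (-(n : ℝ) / K)}) :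
    ∀ ε : ℝ, 0 < ε → ∃ K' : ℝ, 0 < K' ∧
      (1 : ENNReal) - ENNReal.ofReal ε ≤
        ℙ {ω | ∀ n, ∀ i < lam n, ‖x n ω + σ n i ω • N n i ω‖ ≤ K'} := by
  intro ε hε
  have hε2 : 0 < ε / 2 := by linarith
  obtain ⟨K, hK, hH⟩ := hLC (ε / 2) hε2
  set c : ℝ := 1 / (2 * K) with hc_def
  have hc : 0 < c := by positivity
  have hM0 : (0:ℝ) < M := by linarith
  -- growth bound on the population
  have hlam_le : ∀ n : ℕ, (lam n : ℝ) ≤ (lam 0 : ℝ) * M ^ n := by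
    intro n
    induction n with
    | zero => simp
    | succ n ih =>
      calc (lam (n+1) : ℝ) ≤ M * lam n := hlamgrow n
        _ ≤ M * ((lam 0 : ℝ) * M ^ n) := by
            apply mul_le_mul_of_nonneg_left ih hM0.le
        _ = (lam 0 : ℝ) * M ^ (n+1) := by ring
  -- the summable series
  set C : ℝ := 2 * (d : ℝ) * Real.exp (1/2) * Real.exp 1 with hC_def
  have hC : 0 ≤ C := by positivity
  set u : ℕ → ℝ := fun n => ((lam 0 : ℝ) * C) * (M ^ n * Real.exp (-Real.exp (c * n))) with hu_def
  have hu_nonneg : ∀ n, 0 ≤ u n := fun n => by positivity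
  have hu_summable : Summable u := (summable_pow_mul_exp_neg_exp hM0 hc).mul_left _
  set S : ℝ := ∑' n, u n with hS_def
  -- choice of m
  set m : ℝ := max 1 (Real.log (S / (ε / 2)) + 1) with hm_def
  have hm1 : (1:ℝ) ≤ m := le_max_left _ _
  have hm0 : (0:ℝ) ≤ m := by linarith
  have hmS : Real.exp (-m) * S ≤ ε / 2 := by
    rcases le_or_gt S 0 with hS0 | hS0
    · nlinarith [Real.exp_pos (-m)]
    · have h1 : Real.log (S / (ε / 2)) + 1 ≤ m := le_max_right _ _
      have hy : 0 < S / (ε / 2) := by positivity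
      have h2 : Real.exp (-m) ≤ Real.exp (-(Real.log (S / (ε / 2)) + 1)) :=
        Real.exp_le_exp.mpr (by linarith)
      have h3 : Real.exp (-(Real.log (S / (ε / 2)) + 1))
          ≤ Real.exp (-Real.log (S / (ε / 2))) := Real.exp_le_exp.mpr (by linarith)
      have h4 : Real.exp (-Real.log (S / (ε / 2))) = (S / (ε / 2))⁻¹ := by
        rw [Real.exp_neg, Real.exp_log hy]
      have h5 : Real.exp (-m) ≤ (S / (ε / 2))⁻¹ := by rw [← h4]; exact h2.trans h3
      calc Real.exp (-m) * S ≤ (S / (ε / 2))⁻¹ * S :=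
            mul_le_mul_of_nonneg_right h5 hS0.le
        _ = ε / 2 := by field_simp
  -- the good Gaussian event
  set G : Set Ω := {ω | ∀ n, ∀ i < lam n, ‖N n i ω‖ ≤ (d : ℝ) * (m * Real.exp (c * n))}
    with hG_def
  -- bound on the complement of G
  have hGc : ℙ Gᶜ ≤ ENNReal.ofReal (ε / 2) := by
    have hGsub : Gᶜ ⊆ ⋃ n : ℕ, ⋃ i ∈ Finset.range (lam n),
        {ω | (d : ℝ) * (m * Real.exp (c * (n:ℝ))) < ‖N n i ω‖} := by
      intro ω hω
      simp only [hG_def, Set.mem_compl_iff, Set.mem_setOf_eq, not_forall, not_le] at hω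
      obtain ⟨n, i, hi, hlt⟩ := hω
      exact Set.mem_iUnion.mpr ⟨n, Set.mem_biUnion (Finset.mem_range.mpr hi) hlt⟩
    have htail : ∀ n i : ℕ, ℙ {ω | (d : ℝ) * (m * Real.exp (c * n)) < ‖N n i ω‖}
        ≤ (d : ℝ≥0∞) * ENNReal.ofReal (2 * Real.exp (1/2)
            * Real.exp (-(m * Real.exp (c * n)))) := by
      intro n i
      have hset : MeasurableSet {y : EuclideanSpace ℝ (Fin d)
          | (d : ℝ) * (m * Real.exp (c * n)) < ‖y‖} :=
        measurableSet_lt measurable_const measurable_norm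
      have : {ω | (d : ℝ) * (m * Real.exp (c * n)) < ‖N n i ω‖}
          = N n i ⁻¹' {y | (d : ℝ) * (m * Real.exp (c * n)) < ‖y‖} := rfl
      rw [this, ← Measure.map_apply (hNmeas n i) hset, hNlaw n i]
      exact stdGaussianE_tail d (by positivity)
    have hterm : ∀ n, (∑ i ∈ Finset.range (lam n),
        ℙ {ω | (d : ℝ) * (m * Real.exp (c * n)) < ‖N n i ω‖})
        ≤ ENNReal.ofReal (Real.exp (-m) * u n) := by
      intro n
      calc (∑ i ∈ Finset.range (lam n),
            ℙ {ω | (d : ℝ) * (m * Real.exp (c * n)) < ‖N n i ω‖})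
          ≤ ∑ _i ∈ Finset.range (lam n), (d : ℝ≥0∞) * ENNReal.ofReal (2 * Real.exp (1/2)
              * Real.exp (-(m * Real.exp (c * n)))) :=
            Finset.sum_le_sum fun i _ => htail n i
        _ = (lam n : ℝ≥0∞) * ((d : ℝ≥0∞) * ENNReal.ofReal (2 * Real.exp (1/2)
              * Real.exp (-(m * Real.exp (c * n))))) := by
            rw [Finset.sum_const, Finset.card_range, nsmul_eq_mul]
        _ = ENNReal.ofReal ((lam n : ℝ) * ((d : ℝ) * (2 * Real.exp (1/2)
              * Real.exp (-(m * Real.exp (c * n)))))) := by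
            rw [ENNReal.ofReal_mul (Nat.cast_nonneg (lam n) (α := ℝ)),
              ENNReal.ofReal_mul (Nat.cast_nonneg d (α := ℝ)),
              ENNReal.ofReal_natCast, ENNReal.ofReal_natCast]
        _ ≤ ENNReal.ofReal (Real.exp (-m) * u n) := by
            apply ENNReal.ofReal_le_ofReal
            have hE1 : (1:ℝ) ≤ Real.exp (c * n) := Real.one_le_exp (by positivity)
            have hexp : Real.exp (-(m * Real.exp (c * n)))
                ≤ Real.exp (-m) * (Real.exp 1 * Real.exp (-Real.exp (c * n))) := by
              rw [← Real.exp_add, ← Real.exp_add]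
              apply Real.exp_le_exp.mpr
              nlinarith
            have hprod := mul_le_mul (hlam_le n) hexp (Real.exp_pos _).le (by positivity)
            calc (lam n : ℝ) * ((d : ℝ) * (2 * Real.exp (1/2)
                  * Real.exp (-(m * Real.exp (c * n)))))
                = ((d : ℝ) * (2 * Real.exp (1/2)))
                  * ((lam n : ℝ) * Real.exp (-(m * Real.exp (c * n)))) := by ring
              _ ≤ ((d : ℝ) * (2 * Real.exp (1/2)))
                  * (((lam 0 : ℝ) * M ^ n) * (Real.exp (-m)
                    * (Real.exp 1 * Real.exp (-Real.exp (c * n))))) :=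
                  mul_le_mul_of_nonneg_left hprod (by positivity)
              _ = Real.exp (-m) * u n := by rw [hu_def, hC_def]; ring
    calc ℙ Gᶜ ≤ ℙ (⋃ n, ⋃ i ∈ Finset.range (lam n),
          {ω | (d : ℝ) * (m * Real.exp (c * n)) < ‖N n i ω‖}) := measure_mono hGsub
      _ ≤ ∑' n, ℙ (⋃ i ∈ Finset.range (lam n),
          {ω | (d : ℝ) * (m * Real.exp (c * n)) < ‖N n i ω‖}) := measure_iUnion_le _
      _ ≤ ∑' n, ENNReal.ofReal (Real.exp (-m) * u n) :=
          ENNReal.tsum_le_tsum fun n => (measure_biUnion_finset_le _ _).trans (hterm n)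
      _ = ENNReal.ofReal (∑' n, Real.exp (-m) * u n) :=
          (ENNReal.ofReal_tsum_of_nonneg (fun n => by positivity)
            (hu_summable.mul_left _)).symm
      _ = ENNReal.ofReal (Real.exp (-m) * S) := by rw [tsum_mul_left, hS_def]
      _ ≤ ENNReal.ofReal (ε / 2) := ENNReal.ofReal_le_ofReal hmS
  -- the final constant
  refine ⟨K + K * ((d : ℝ) * m), by positivity, ?_⟩
  set T : Set Ω := {ω | ∀ n, ∀ i < lam n,
    ‖x n ω + σ n i ω • N n i ω‖ ≤ K + K * ((d : ℝ) * m)} with hT_def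
  set H : Set Ω := {ω | ∀ n, ‖x n ω‖ ≤ K ∧ ∀ i < lam n,
    σ n i ω ≤ K * Real.exp (-(n : ℝ) / K)} with hH_def
  have hsub : H ⊆ T ∪ Gᶜ := by
    intro ω hωH
    by_cases hωG : ω ∈ G
    · left
      intro n i hi
      have hx : ‖x n ω‖ ≤ K := (hωH n).1
      have hσ : σ n i ω ≤ K * Real.exp (-(n : ℝ) / K) := (hωH n).2 i hi
      have hN : ‖N n i ω‖ ≤ (d : ℝ) * (m * Real.exp (c * n)) := hωG n i hi
      have hσ0 : 0 < σ n i ω := hσpos n i ω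
      have hstep : σ n i ω * ‖N n i ω‖
          ≤ (K * Real.exp (-(n : ℝ) / K)) * ((d : ℝ) * (m * Real.exp (c * n))) :=
        mul_le_mul hσ hN (norm_nonneg _) (by positivity)
      have hexp1 : Real.exp (-(n : ℝ) / K) * Real.exp (c * n) ≤ 1 := by
        rw [← Real.exp_add]
        apply Real.exp_le_one_iff.mpr
        have hn0 : (0:ℝ) ≤ (n:ℝ) := Nat.cast_nonneg n
        have heq : -(n : ℝ) / K + c * n = -((n : ℝ) / (2 * K)) := by
          rw [hc_def]; field_simp; ring
        rw [heq]
        have : (0:ℝ) ≤ (n : ℝ) / (2 * K) := by positivity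
        linarith
      calc ‖x n ω + σ n i ω • N n i ω‖
          ≤ ‖x n ω‖ + ‖σ n i ω • N n i ω‖ := norm_add_le _ _
        _ = ‖x n ω‖ + |σ n i ω| * ‖N n i ω‖ := by rw [norm_smul, Real.norm_eq_abs]
        _ = ‖x n ω‖ + σ n i ω * ‖N n i ω‖ := by rw [abs_of_pos hσ0]
        _ ≤ K + (K * Real.exp (-(n : ℝ) / K)) * ((d : ℝ) * (m * Real.exp (c * n))) :=
            add_le_add hx hstep
        _ = K + (K * ((d : ℝ) * m)) * (Real.exp (-(n : ℝ) / K) * Real.exp (c * n)) := by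
            ring
        _ ≤ K + (K * ((d : ℝ) * m)) * 1 :=
            add_le_add_right (mul_le_mul_of_nonneg_left hexp1 (by positivity)) _
        _ = K + K * ((d : ℝ) * m) := by ring
    · right; exact hωG
  have h1 : (1 : ℝ≥0∞) ≤ ℙ H + ENNReal.ofReal (ε / 2) := tsub_le_iff_right.mp hH
  have h2 : ℙ H ≤ ℙ T + ℙ Gᶜ := (measure_mono hsub).trans (measure_union_le _ _)
  have h3 : (1 : ℝ≥0∞) ≤ ℙ T + ENNReal.ofReal ε := by
    calc (1 : ℝ≥0∞) ≤ ℙ H + ENNReal.ofReal (ε / 2) := h1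
      _ ≤ (ℙ T + ENNReal.ofReal (ε / 2)) + ENNReal.ofReal (ε / 2) :=
          add_le_add (h2.trans (add_le_add_right hGc _)) le_rfl
      _ = ℙ T + ENNReal.ofReal ε := by
          rw [add_assoc, ← ENNReal.ofReal_add hε2.le hε2.le, add_halves]
  exact tsub_le_iff_right.mpr h3
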